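/- If x : ℝ → ℝ is continuous and periodic with period 1, and x(t) = Σ_{k=1}^∞ c_k sin(2kπt) (uniformly convergent) with all c_k ≠ 0, then the only continuous 1-periodic odd function β with ∫_0^1 x(t-u) β(u) du = 0 for all t ∈ ℝ is β = 0. -/

import Mathlib

open Real Filter

open Topology MeasureTheory Complex intervalIntegral Function Set AddCircle

noncomputable def eint (m : ℤ) (t : ℝ) : ℂ := Complex.exp (2 * Real.pi * Complex.I * m * t)

lemma eint_norm (m : ℤ) (t : ℝ) : ‖eint m t‖ = 1 := by
  have h : (2 * (Real.pi:ℂ) * Complex.I * m * t) = ((2 * Real.pi * m * t : ℝ) : ℂ) * Complex.I := by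
    push_cast; ring
  rw [eint, h, Complex.norm_exp_ofReal_mul_I]

lemma eint_cont (m : ℤ) : Continuous (eint m) := by
  unfold eint; fun_prop

lemma eint_add (m : ℤ) (s u : ℝ) : eint m (s + u) = eint m s * eint m u := by
  rw [eint, eint, eint, ← Complex.exp_add]; push_cast; ring_nf

lemma eint_periodic (m : ℤ) : Function.Periodic (eint m) 1 := by
  intro s
  rw [eint_add]
  have : eint m 1 = 1 := by
    rw [eint, Complex.ofReal_one, mul_one, show (2 * (Real.pi:ℂ) * Complex.I * m) = m * (2 * Real.pi * Complex.I) by ring,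
      Complex.exp_int_mul_two_pi_mul_I]
  rw [this, mul_one]

lemma integral_eint (m : ℤ) : (∫ t in (0:ℝ)..1, eint m t) = if m = 0 then 1 else 0 := by
  rcases eq_or_ne m 0 with rfl | hm
  · simp [eint]
  · rw [if_neg hm]
    have hc : (2 * (Real.pi:ℂ) * Complex.I * m) ≠ 0 := by
      simp [Real.pi_ne_zero, Complex.I_ne_zero, hm, Complex.ofReal_ne_zero]
    have := integral_exp_mul_complex (a := 0) (b := 1) hc
    simp only [eint]
    rw [show (fun t : ℝ => Complex.exp (2 * (Real.pi:ℂ) * Complex.I * m * t)) = (fun t : ℝ => Complex.exp ((2 * (Real.pi:ℂ) * Complex.I * m) * t)) from rfl, this]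
    rw [Complex.ofReal_one, Complex.ofReal_zero, mul_one, mul_zero, Complex.exp_zero]
    rw [show (2 * (Real.pi:ℂ) * Complex.I * m) = m * (2 * Real.pi * Complex.I) by ring,
      Complex.exp_int_mul_two_pi_mul_I]
    simp
lemma sin_eint (j : ℕ) (m : ℤ) :
    (∫ t in (0:ℝ)..1, ((Real.sin (2 * (j + 1) * Real.pi * t) : ℝ) : ℂ) * eint m t)
      = ((if m = -(j+1) then (1:ℂ) else 0) - if m = (j+1:ℤ) then 1 else 0) / (2 * Complex.I) := by
  have key : ∀ t : ℝ, ((Real.sin (2 * (j + 1) * Real.pi * t) : ℝ) : ℂ) * eint m t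
      = (eint (m - ((j:ℤ)+1)) t - eint ((j:ℤ)+1+m) t) * Complex.I / 2 := by
    intro t
    rw [Complex.ofReal_sin, Complex.sin]
    have e1 : Complex.exp (-(((2 * (j + 1) * Real.pi * t : ℝ)):ℂ) * Complex.I) * eint m t
        = eint (m - ((j:ℤ)+1)) t := by
      rw [eint, eint, ← Complex.exp_add]; congr 1; push_cast; ring
    have e2 : Complex.exp ((((2 * (j + 1) * Real.pi * t : ℝ)):ℂ) * Complex.I) * eint m t
        = eint ((j:ℤ)+1+m) t := by
      rw [eint, eint, ← Complex.exp_add]; congr 1; push_cast; ring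
    calc (Complex.exp (-(((2 * (j + 1) * Real.pi * t : ℝ)):ℂ) * Complex.I)
            - Complex.exp ((((2 * (j + 1) * Real.pi * t : ℝ)):ℂ) * Complex.I)) * Complex.I / 2 * eint m t
        = (Complex.exp (-(((2 * (j + 1) * Real.pi * t : ℝ)):ℂ) * Complex.I) * eint m t
            - Complex.exp ((((2 * (j + 1) * Real.pi * t : ℝ)):ℂ) * Complex.I) * eint m t) * Complex.I / 2 := by ring
      _ = (eint (m - ((j:ℤ)+1)) t - eint ((j:ℤ)+1+m) t) * Complex.I / 2 := by rw [e1, e2]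
      _ = (eint (m - ((j:ℤ)+1)) t - eint ((j:ℤ)+1+m) t) * Complex.I / 2 := by ring_nf
  rw [intervalIntegral.integral_congr (g := fun t => (eint (m - ((j:ℤ)+1)) t - eint ((j:ℤ)+1+m) t) * Complex.I / 2) (fun t _ => key t)]
  rw [intervalIntegral.integral_div, intervalIntegral.integral_mul_const,
    intervalIntegral.integral_sub ((eint_cont _).intervalIntegrable _ _) ((eint_cont _).intervalIntegrable _ _),
    integral_eint, integral_eint]
  rw [show (if m - ((j:ℤ)+1) = 0 then (1:ℂ) else 0) = (if m = (j:ℤ)+1 then 1 else 0) from by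
        split_ifs with h h' <;> (try rfl) <;> omega,
      show (if ((j:ℤ)+1+m) = 0 then (1:ℂ) else 0) = (if m = -((j:ℤ)+1) then 1 else 0) from by
        split_ifs with h h' <;> (try rfl) <;> omega]
  have hI : ∀ z : ℂ, z / (2*Complex.I) = z * Complex.I / (-2) := fun z => by
    rw [div_eq_div_iff (by simp [Complex.I_ne_zero]) (by norm_num)]
    linear_combination (-2*z) * Complex.I_sq
  rw [hI]
  ring
lemma X_ne_zero (x : ℝ → ℝ) (c : ℕ → ℝ) (hxc : Continuous x)
    (hconv : TendstoUniformly
      (fun N t => ∑ k ∈ Finset.range N, c k * Real.sin (2 * (k + 1) * π * t)) x atTop)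
    (hc : ∀ k, c k ≠ 0) (m : ℤ) (hm : m ≠ 0) :
    (∫ t in (0:ℝ)..1, (x t : ℂ) * eint m t) ≠ 0 := by
  set P : ℕ → ℝ → ℝ := fun N t => ∑ k ∈ Finset.range N, c k * Real.sin (2 * (k + 1) * π * t) with hP
  have hPcont : ∀ N, Continuous (P N) := by
    intro N; apply continuous_finset_sum; intro k _; fun_prop
  have hPint : ∀ N, (∫ t in (0:ℝ)..1, ((P N t : ℝ):ℂ) * eint m t)
      = ∑ k ∈ Finset.range N, (c k : ℂ) *
        (((if m = -(k+1) then (1:ℂ) else 0) - if m = (k+1:ℤ) then 1 else 0) / (2*Complex.I)) := by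
    intro N
    have hint : ∀ t, t ∈ Set.uIcc (0:ℝ) 1 → ((P N t : ℝ):ℂ) * eint m t
        = ∑ k ∈ Finset.range N, (c k : ℂ) * (((Real.sin (2 * (k + 1) * Real.pi * t) : ℝ):ℂ) * eint m t) := by
      intro t _
      simp only [hP]
      push_cast
      rw [Finset.sum_mul]
      exact Finset.sum_congr rfl (fun k _ => by ring)
    rw [intervalIntegral.integral_congr hint, intervalIntegral.integral_finset_sum]
    · exact Finset.sum_congr rfl (fun k _ => by
        rw [intervalIntegral.integral_const_mul, sin_eint])
    · intro k _
      exact Continuous.intervalIntegrable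
        (continuous_const.mul ((Complex.continuous_ofReal.comp
          (by fun_prop : Continuous fun t:ℝ => Real.sin (2*(k+1)*Real.pi*t))).mul (eint_cont m))) _ _
  obtain ⟨j, hjm⟩ : ∃ j : ℕ, ((j:ℤ)+1) = m.natAbs := ⟨m.natAbs - 1, by omega⟩
  set v : ℂ := (c j : ℂ) *
    (((if m = -((j:ℤ)+1) then (1:ℂ) else 0) - if m = ((j:ℤ)+1) then 1 else 0) / (2*Complex.I)) with hv
  have hvne : v ≠ 0 := by
    have h2I : (2*Complex.I) ≠ 0 := by simp [Complex.I_ne_zero]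
    have hcj : ((c j : ℂ)) ≠ 0 := by exact_mod_cast Complex.ofReal_ne_zero.mpr (hc j)
    rcases Int.natAbs_eq m with h | h
    · have hpos : m = ((j:ℤ)+1) := by omega
      have hneg : ¬ (m = -((j:ℤ)+1)) := by omega
      rw [hv, if_neg hneg, if_pos hpos]
      simp only [zero_sub]
      exact mul_ne_zero hcj (div_ne_zero (by norm_num) h2I)
    · have hneg : m = -((j:ℤ)+1) := by omega
      have hpos : ¬ (m = ((j:ℤ)+1)) := by omega
      rw [hv, if_pos hneg, if_neg hpos]
      simp only [sub_zero]
      exact mul_ne_zero hcj (div_ne_zero one_ne_zero h2I)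
  have hsum : ∀ N, j+1 ≤ N → (∑ k ∈ Finset.range N, (c k : ℂ) *
        (((if m = -((k:ℤ)+1) then (1:ℂ) else 0) - if m = ((k:ℤ)+1) then 1 else 0) / (2*Complex.I))) = v := by
    intro N hN
    rw [Finset.sum_eq_single j]
    · intro k _ hkj
      rw [if_neg (by omega), if_neg (by omega)]
      simp
    · intro hjN
      simp only [Finset.mem_range] at hjN
      omega
  -- limit of integrals
  obtain ⟨M, hM⟩ := isCompact_Icc.exists_bound_of_continuousOn (s := Set.Icc (0:ℝ) 1) hxc.continuousOn
  have hlim1 : Tendsto (fun N => ∫ t in (0:ℝ)..1, ((P N t : ℝ):ℂ) * eint m t) atTop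
      (𝓝 (∫ t in (0:ℝ)..1, (x t : ℂ) * eint m t)) := by
    apply intervalIntegral.tendsto_integral_filter_of_dominated_convergence (bound := fun _ => M + 1)
    · exact Eventually.of_forall (fun N =>
        ((Complex.continuous_ofReal.comp (hPcont N)).mul (eint_cont m)).aestronglyMeasurable)
    · have h1 := Metric.tendstoUniformly_iff.mp hconv 1 one_pos
      filter_upwards [h1] with N hN
      refine Eventually.of_forall (fun t ht => ?_)
      have ht' : t ∈ Set.Icc (0:ℝ) 1 := by
        rcases Set.mem_uIoc.mp ht with h | h
        · exact ⟨h.1.le, h.2⟩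
        · constructor <;> [linarith [h.1]; linarith [h.2]]
      have : ‖((P N t : ℝ):ℂ) * eint m t‖ = |P N t| := by
        rw [norm_mul, eint_norm, mul_one, Complex.norm_real, Real.norm_eq_abs]
      rw [this]
      have := hN t
      rw [Real.dist_eq] at this
      have hMx := hM t ht'
      rw [Real.norm_eq_abs] at hMx
      calc |P N t| = |x t - (x t - P N t)| := by congr 1; ring
        _ ≤ |x t| + |x t - P N t| := abs_sub _ _
        _ ≤ M + 1 := add_le_add hMx this.le
    · exact intervalIntegrable_const
    · refine Eventually.of_forall (fun t _ => ?_)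
      exact ((Complex.continuous_ofReal.tendsto _).comp (hconv.tendsto_at t)).mul_const _
  have hlim2 : Tendsto (fun N => ∫ t in (0:ℝ)..1, ((P N t : ℝ):ℂ) * eint m t) atTop (𝓝 v) := by
    rw [show (fun N => ∫ t in (0:ℝ)..1, ((P N t : ℝ):ℂ) * eint m t)
        = fun N => ∑ k ∈ Finset.range N, (c k : ℂ) *
          (((if m = -((k:ℤ)+1) then (1:ℂ) else 0) - if m = ((k:ℤ)+1) then 1 else 0) / (2*Complex.I))
        from funext hPint]
    refine Tendsto.congr' ?_ tendsto_const_nhds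
    filter_upwards [eventually_ge_atTop (j+1)] with N hN
    exact (hsum N hN).symm
  rw [tendsto_nhds_unique hlim1 hlim2]
  exact hvne
lemma shift_int (x : ℝ → ℝ) (hxc : Continuous x) (hxp : Function.Periodic x 1) (m : ℤ) (u : ℝ) :
    (∫ t in (0:ℝ)..1, (x (t - u) : ℂ) * eint m t)
      = eint m u * ∫ s in (0:ℝ)..1, (x s : ℂ) * eint m s := by
  set H : ℝ → ℂ := fun s => (x s : ℂ) * eint m (s + u) with hH
  have hHper : Function.Periodic H 1 := by
    intro s
    simp only [hH]
    rw [hxp s, show s + 1 + u = s + u + 1 by ring, eint_periodic m (s + u)]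
  have h1 : ∀ t ∈ Set.uIcc (0:ℝ) 1, (x (t - u) : ℂ) * eint m t = H (t - u) := by
    intro t _
    simp only [hH]
    rw [sub_add_cancel]
  rw [intervalIntegral.integral_congr h1, intervalIntegral.integral_comp_sub_right H u,
    zero_sub, sub_eq_neg_add, hHper.intervalIntegral_add_eq (-u) 0, zero_add]
  have h2 : ∀ s ∈ Set.uIcc (0:ℝ) 1, H s = (x s : ℂ) * eint m s * eint m u := by
    intro s _
    simp only [hH, eint_add m s u]
    ring
  rw [intervalIntegral.integral_congr h2, intervalIntegral.integral_mul_const]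
  ring

lemma conv_coeff (x β : ℝ → ℝ) (hxc : Continuous x) (hxp : Function.Periodic x 1)
    (hβc : Continuous β) (m : ℤ) :
    (∫ t in (0:ℝ)..1, ((∫ u in (0:ℝ)..1, x (t - u) * β u : ℝ) : ℂ) * eint m t)
      = (∫ t in (0:ℝ)..1, (x t : ℂ) * eint m t) * (∫ u in (0:ℝ)..1, (β u : ℂ) * eint m u) := by
  have step1 : ∀ t ∈ Set.uIcc (0:ℝ) 1, ((∫ u in (0:ℝ)..1, x (t - u) * β u : ℝ) : ℂ) * eint m t
      = ∫ u in (0:ℝ)..1, (x (t - u) : ℂ) * (β u : ℂ) * eint m t := by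
    intro t _
    rw [← intervalIntegral.integral_ofReal, ← intervalIntegral.integral_mul_const]
    push_cast
    rfl
  rw [intervalIntegral.integral_congr step1]
  have hF : Continuous (Function.uncurry fun (t u : ℝ) => (x (t - u) : ℂ) * (β u : ℂ) * eint m t) := by
    apply Continuous.mul
    · apply Continuous.mul
      · exact Complex.continuous_ofReal.comp (hxc.comp (continuous_fst.sub continuous_snd))
      · exact Complex.continuous_ofReal.comp (hβc.comp continuous_snd)
    · exact (eint_cont m).comp continuous_fst
  have hint : Integrable (Function.uncurry fun (t u : ℝ) => (x (t - u) : ℂ) * (β u : ℂ) * eint m t)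
      ((volume.restrict (Set.Ioc (0:ℝ) 1)).prod (volume.restrict (Set.Ioc (0:ℝ) 1))) := by
    rw [Measure.prod_restrict]
    exact (hF.continuousOn.integrableOn_compact (isCompact_Icc.prod isCompact_Icc)).mono_set
      (Set.prod_mono Set.Ioc_subset_Icc_self Set.Ioc_subset_Icc_self)
  have swap := MeasureTheory.integral_integral_swap hint
  rw [intervalIntegral.integral_of_le (zero_le_one)]
  rw [show (fun t => ∫ u in (0:ℝ)..1, (x (t - u) : ℂ) * (β u : ℂ) * eint m t)
      = fun t => ∫ u in Set.Ioc (0:ℝ) 1, (x (t - u) : ℂ) * (β u : ℂ) * eint m t from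
    funext fun t => intervalIntegral.integral_of_le zero_le_one]
  rw [swap]
  rw [← intervalIntegral.integral_of_le (zero_le_one)]
  have step2 : ∀ u ∈ Set.uIcc (0:ℝ) 1,
      (∫ t in Set.Ioc (0:ℝ) 1, (x (t - u) : ℂ) * (β u : ℂ) * eint m t)
        = (∫ t in (0:ℝ)..1, (x t : ℂ) * eint m t) * ((β u : ℂ) * eint m u) := by
    intro u _
    rw [← intervalIntegral.integral_of_le (zero_le_one)]
    have : ∀ t ∈ Set.uIcc (0:ℝ) 1, (x (t - u) : ℂ) * (β u : ℂ) * eint m t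
        = (x (t - u) : ℂ) * eint m t * (β u : ℂ) := fun t _ => by ring
    rw [intervalIntegral.integral_congr this, intervalIntegral.integral_mul_const,
      shift_int x hxc hxp m u]
    ring
  rw [intervalIntegral.integral_congr step2, intervalIntegral.integral_const_mul]

lemma odd_int (β : ℝ → ℝ) (hβc : Continuous β) (hβp : ∀ t, β (t + 1) = β t)
    (hβodd : ∀ t, β (-t) = -β t) : (∫ u in (0:ℝ)..1, β u) = 0 := by
  have hper : Function.Periodic β 1 := hβp
  have h1 := hper.intervalIntegral_add_eq (-(2⁻¹:ℝ)) 0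
  rw [zero_add, show (-(2⁻¹:ℝ)) + 1 = 2⁻¹ by norm_num] at h1
  rw [← h1]
  rw [← intervalIntegral.integral_add_adjacent_intervals (b := (0:ℝ))
    (hβc.intervalIntegrable _ _) (hβc.intervalIntegrable _ _)]
  have hneg : (∫ u in (-(2⁻¹:ℝ))..0, β u) = - ∫ u in (0:ℝ)..2⁻¹, β u := by
    have h2 := intervalIntegral.integral_comp_neg (a := (0:ℝ)) (b := 2⁻¹) (f := β)
    rw [neg_zero] at h2
    rw [← h2, intervalIntegral.integral_congr (g := fun u => -β u) (fun u _ => hβodd u),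
      intervalIntegral.integral_neg]
  rw [hneg]
  ring
lemma coeff_zero_imp_zero (β : ℝ → ℝ) (hβc : Continuous β) (hβp : ∀ t, β (t + 1) = β t)
    (hB : ∀ m : ℤ, (∫ u in (0:ℝ)..1, (β u : ℂ) * eint m u) = 0) : β = 0 := by
  haveI : Fact ((0:ℝ) < 1) := ⟨one_pos⟩
  set βℂ : ℝ → ℂ := fun t => (β t : ℂ) with hβℂ
  have hβℂc : Continuous βℂ := Complex.continuous_ofReal.comp hβc
  have heq : βℂ 0 = βℂ 1 := by simp only [hβℂ]; rw [show (1:ℝ) = 0 + 1 by ring, hβp 0]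
  set g : AddCircle (1:ℝ) → ℂ := AddCircle.liftIco 1 0 βℂ with hg
  have hgc : Continuous g := AddCircle.liftIco_zero_continuous heq hβℂc.continuousOn
  have hcoeff : ∀ n : ℤ, fourierCoeff g n = 0 := by
    intro n
    rw [hg, fourierCoeff_liftIco_eq, fourierCoeffOn_eq_integral]
    have : ∀ x_1 ∈ Set.uIcc (0:ℝ) ((0:ℝ) + 1),
        (fourier (-n) (x_1 : AddCircle ((0:ℝ) + 1 - 0)) • βℂ x_1) = (β x_1 : ℂ) * eint (-n) x_1 := by
      intro t _
      rw [fourier_coe_apply, smul_eq_mul]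
      simp only [hβℂ, eint]
      rw [show ((0:ℝ) + 1 - 0) = 1 by norm_num]
      push_cast
      ring_nf
    rw [intervalIntegral.integral_congr this]
    simp only [zero_add]
    rw [hB (-n)]
    simp
  set G : C(AddCircle (1:ℝ), ℂ) := ⟨g, hgc⟩ with hG
  have hrepr : fourierBasis.repr (ContinuousMap.toLp (E := ℂ) 2 haarAddCircle ℂ G) = 0 := by
    ext i
    rw [fourierBasis_repr, fourierCoeff_toLp]
    simpa [hG] using hcoeff i
  have hL0 : (ContinuousMap.toLp (E := ℂ) 2 haarAddCircle ℂ G) = 0 := by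
    apply fourierBasis.repr.injective
    rw [hrepr, map_zero]
  have hae : (⇑G) =ᵐ[(haarAddCircle : Measure (AddCircle (1:ℝ)))] (0 : AddCircle (1:ℝ) → ℂ) := by
    refine (ContinuousMap.coeFn_toLp (haarAddCircle : Measure (AddCircle (1:ℝ))) (𝕜 := ℂ) (p := 2) G).symm.trans ?_
    rw [hL0]
    exact Lp.coeFn_zero _ _ _
  have hgz : g = (fun _ => 0) := by
    have := (Continuous.ae_eq_iff_eq (μ := (haarAddCircle : Measure (AddCircle (1:ℝ))))
      hgc continuous_const).mp hae
    exact this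
  funext t
  have hper : Function.Periodic β 1 := hβp
  have hfr : β t = β (Int.fract t) := by
    have h := hper.sub_int_mul_eq (x := t) (n := ⌊t⌋)
    rw [mul_one] at h
    rw [← h]
    rfl
  have hmem : Int.fract t ∈ Set.Ico (0:ℝ) 1 := ⟨Int.fract_nonneg t, Int.fract_lt_one t⟩
  have : βℂ (Int.fract t) = 0 := by
    have := AddCircle.liftIco_coe_apply (f := βℂ) (p := (1:ℝ)) (a := (0:ℝ))
      (by rwa [zero_add] : Int.fract t ∈ Set.Ico (0:ℝ) (0 + 1))
    rw [← hg] at this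
    rw [← this, hgz]
  have hb0 : β (Int.fract t) = 0 := by
    simp only [hβℂ] at this
    exact_mod_cast this
  simp [hfr, hb0]

theorem stmt12 (x β : ℝ → ℝ) (c : ℕ → ℝ)
    (hxc : Continuous x) (hxp : ∀ t, x (t + 1) = x t)
    (hconv : TendstoUniformly
      (fun N t => ∑ k ∈ Finset.range N, c k * Real.sin (2 * (k + 1) * π * t)) x atTop)
    (hc : ∀ k, c k ≠ 0)
    (hβc : Continuous β) (hβp : ∀ t, β (t + 1) = β t) (hβodd : ∀ t, β (-t) = -β t)
    (horth : ∀ t : ℝ, (∫ u in (0:ℝ)..1, x (t - u) * β u) = 0) :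
    β = 0 := by
  have hxper : Function.Periodic x 1 := hxp
  apply coeff_zero_imp_zero β hβc hβp
  intro m
  rcases eq_or_ne m 0 with rfl | hm
  · have h0 : ∀ u ∈ Set.uIcc (0:ℝ) 1, (β u : ℂ) * eint 0 u = ((β u : ℝ) : ℂ) := by
      intro u _
      simp [eint]
    rw [intervalIntegral.integral_congr h0, intervalIntegral.integral_ofReal,
      odd_int β hβc hβp hβodd]
    simp
  · have hX := X_ne_zero x c hxc hconv hc m hm
    have hcc := conv_coeff x β hxc hxper hβc m
    have hz : (∫ t in (0:ℝ)..1, ((∫ u in (0:ℝ)..1, x (t - u) * β u : ℝ) : ℂ) * eint m t) = 0 := by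
      have h1 : ∀ t ∈ Set.uIcc (0:ℝ) 1,
          ((∫ u in (0:ℝ)..1, x (t - u) * β u : ℝ) : ℂ) * eint m t = 0 := by
        intro t _
        rw [horth t]
        simp
      rw [intervalIntegral.integral_congr h1]
      simp
    rw [hz] at hcc
    exact (mul_eq_zero.mp hcc.symm).resolve_left hX
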